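/- Let A be a ring of rank n with a unital basis β = (e₁,…,eₙ) (a ℤ-basis with e₁ = 1), and let B(A,β) = (b_{ij}) be its Gram matrix. Then b₁₁ = n and b_{ii} ≡ b_{1i}² (mod 2) for all i = 2,…,n; that is, B(A,β) is tracelike. -/

import Mathlib

open Matrix

section Aux

open Finset

lemma trace_sq_mod2_aux {n : ℕ} (M : Matrix (Fin n) (Fin n) (ZMod 2)) :
    (M * M).trace = M.trace ^ 2 := by
  have hadd : ∀ x : ZMod 2, x + x = 0 := by decide
  rw [Matrix.trace, Matrix.trace]
  simp only [Matrix.diag, Matrix.mul_apply]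
  rw [sum_pow_char, ← Finset.sum_product', ← Finset.diag_union_offDiag,
    Finset.sum_union (Finset.disjoint_diag_offDiag _), Finset.sum_diag]
  have h0 : ∑ p ∈ Finset.univ.offDiag, M p.1 p.2 * M p.2 p.1 = 0 := by
    apply Finset.sum_involution (fun p _ => Prod.swap p)
    · intro a ha
      simp only [Prod.fst_swap, Prod.snd_swap]
      rw [mul_comm]; exact hadd _
    · intro a ha _ h
      rw [Finset.mem_offDiag] at ha
      exact ha.2.2 ((Prod.ext_iff.mp h).1.symm)
    · intro a ha
      rw [Finset.mem_offDiag] at ha ⊢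
      exact ⟨ha.2.1, ha.1, fun h => ha.2.2 h.symm⟩
    · intro a ha; simp
  rw [h0, add_zero]
  congr 1; ext i; ring

lemma trace_sq_int_aux {n : ℕ} (M : Matrix (Fin n) (Fin n) ℤ) :
    (M * M).trace ≡ M.trace ^ 2 [ZMOD 2] := by
  apply (ZMod.intCast_eq_intCast_iff _ _ 2).mp
  have hM : ∀ N : Matrix (Fin n) (Fin n) ℤ,
      ((N.trace : ℤ) : ZMod 2) = (N.map (Int.cast : ℤ → ZMod 2)).trace := by
    intro N
    simp [Matrix.trace, Matrix.diag]
  push_cast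
  have hmul : (M * M).map (Int.cast : ℤ → ZMod 2) =
      M.map Int.cast * M.map Int.cast := by
    ext i j; simp [Matrix.mul_apply]
  rw [hM, hM, hmul, trace_sq_mod2_aux]

end Aux

/-- The Gram matrix of a ring of rank `n` with respect to a ℤ-basis `b`:
its `(i,j)` entry is the trace of the matrix of left multiplication by `b i * b j`. -/
noncomputable def gramMatrix {n : ℕ} {A : Type} [Ring A] (b : Module.Basis (Fin n) ℤ A) :
    Matrix (Fin n) (Fin n) ℤ :=
  Matrix.of fun i j => (Algebra.leftMulMatrix b (b i * b j)).trace

/-- If `b` is a unital basis (i.e. `b 0 = 1`) of a ring of rank `n`, then the Gram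
matrix `B = B(A, b)` satisfies `B 0 0 = n` and `B i i ≡ (B 0 i)² (mod 2)` for all
`i ≠ 0`; that is, `B` is tracelike. -/
theorem gramMatrix_tracelike (n : ℕ) [NeZero n] (A : Type) [Ring A]
    (b : Module.Basis (Fin n) ℤ A) (hb : b 0 = 1) :
    gramMatrix b 0 0 = n ∧
      ∀ i : Fin n, i ≠ 0 → gramMatrix b i i ≡ (gramMatrix b 0 i) ^ 2 [ZMOD 2] := by
  constructor
  · show ((Algebra.leftMulMatrix b (b 0 * b 0)).trace) = n
    rw [hb, one_mul, _root_.map_one, Matrix.trace_one]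
    simp
  · intro i _
    show (Algebra.leftMulMatrix b (b i * b i)).trace ≡
        ((Algebra.leftMulMatrix b (b 0 * b i)).trace) ^ 2 [ZMOD 2]
    rw [hb, one_mul, _root_.map_mul]
    exact trace_sq_int_aux _
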